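/- (Theorem 3.8.) Let Z be a random vector in ℝ^d and Y an observation such that for almost every realization y of Y the posterior density p_{Z|Y}(·|y) is μ-strongly log-concave and satisfies (sup_z p_{Z|Y}(z|y))·(2π/μ)^{d/2} ≤ 1. Let D: ℝ^d → ℝ^{n_x} be L_D-Lipschitz, let X = D(Z), and assume the pushforward identity D_# p_{Z|Y}(·|y) = p_{X|Y}(·|y) for almost every y. Let Z_MAP = argmax_z p_{Z|Y}(z|Y) and X_MMSE = E[X|Y]. Then E‖D(Z_MAP) − X_MMSE‖ ≤ 2 L_D √(d/μ), and E‖X − D(Z_MAP)‖² ≤ D* + 4 L_D²·(d/μ), where D* = E‖X − X_MMSE‖². -/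

import Mathlib

open MeasureTheory Set Real ProbabilityTheory

/-- A probability density `p` on `ℝᵈ` is `μc`-strongly log-concave if `-log p` is twice
continuously differentiable and `μc`-strongly convex. -/
def StronglyLogConcave {d : ℕ} (μc : ℝ) (p : EuclideanSpace ℝ (Fin d) → ℝ) : Prop :=
  ContDiff ℝ 2 (fun x => -Real.log (p x)) ∧
    StrongConvexOn Set.univ μc (fun x => -Real.log (p x))

lemma aux_se {s : ℝ} (hs : 0 ≤ s) : s * Real.exp (-s) ≤ (Real.exp 1)⁻¹ := by
  have h1 : s * Real.exp 1 ≤ Real.exp s := by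
    have h2 := Real.add_one_le_exp (s - 1)
    have h3 : Real.exp (s - 1) * Real.exp 1 = Real.exp s := by
      rw [← Real.exp_add]; ring_nf
    nlinarith [Real.exp_pos 1, Real.exp_pos (s - 1)]
  rw [Real.exp_neg]
  rw [mul_inv_le_iff₀ (Real.exp_pos s)]
  rw [inv_mul_eq_div, le_div_iff₀ (Real.exp_pos 1)]
  linarith

lemma aux_ptwise {c : ℝ} (hc : 0 < c) (x : ℝ) :
    x ^ 2 * Real.exp (-c * x ^ 2) ≤ 2 / (c * Real.exp 1) * Real.exp (-(c / 2) * x ^ 2) := by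
  have hs : (0:ℝ) ≤ c / 2 * x ^ 2 := by positivity
  have h1 := aux_se hs
  have h2 : Real.exp (-c * x ^ 2) = Real.exp (-(c / 2 * x ^ 2)) * Real.exp (-(c / 2) * x ^ 2) := by
    rw [← Real.exp_add]; ring_nf
  have h3 : x ^ 2 * Real.exp (-c * x ^ 2)
      = 2 / c * (c / 2 * x ^ 2 * Real.exp (-(c / 2 * x ^ 2))) * Real.exp (-(c / 2) * x ^ 2) := by
    rw [h2]; field_simp
  rw [h3]
  have h5 : 2 / c * (c / 2 * x ^ 2 * Real.exp (-(c / 2 * x ^ 2))) ≤ 2 / c * (Real.exp 1)⁻¹ := by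
    apply mul_le_mul_of_nonneg_left h1 (by positivity)
  have h6 : 2 / c * (Real.exp 1)⁻¹ = 2 / (c * Real.exp 1) := by
    field_simp
  calc 2 / c * (c / 2 * x ^ 2 * Real.exp (-(c / 2 * x ^ 2))) * Real.exp (-(c / 2) * x ^ 2)
      ≤ 2 / c * (Real.exp 1)⁻¹ * Real.exp (-(c / 2) * x ^ 2) := by
        apply mul_le_mul_of_nonneg_right h5 (Real.exp_pos _).le
    _ = 2 / (c * Real.exp 1) * Real.exp (-(c / 2) * x ^ 2) := by rw [h6]

lemma aux_int_sq_exp {c : ℝ} (hc : 0 < c) :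
    Integrable (fun x : ℝ => x ^ 2 * Real.exp (-c * x ^ 2)) := by
  have := integrable_rpow_mul_exp_neg_mul_sq hc (s := 2) (by norm_num)
  simpa [Real.rpow_two] using this

lemma aux_onedim {c : ℝ} (hc : 0 < c) :
    ∫ x : ℝ, x ^ 2 * Real.exp (-c * x ^ 2) ≤ Real.sqrt 2 / c * Real.sqrt (π / c) := by
  have hint := aux_int_sq_exp hc
  have hc2 : 0 < c / 2 := by linarith
  have hint2 : Integrable (fun x : ℝ => 2 / (c * Real.exp 1) * Real.exp (-(c / 2) * x ^ 2)) :=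
    (integrable_exp_neg_mul_sq hc2).const_mul _
  have h1 : ∫ x : ℝ, x ^ 2 * Real.exp (-c * x ^ 2)
      ≤ ∫ x : ℝ, 2 / (c * Real.exp 1) * Real.exp (-(c / 2) * x ^ 2) :=
    integral_mono hint hint2 (fun x => aux_ptwise hc x)
  rw [MeasureTheory.integral_const_mul, integral_gaussian] at h1
  have h2 : Real.sqrt (π / (c / 2)) = Real.sqrt 2 * Real.sqrt (π / c) := by
    rw [← Real.sqrt_mul (by norm_num)]
    congr 1
    field_simp
  rw [h2] at h1
  refine h1.trans ?_
  have he : (2:ℝ) ≤ Real.exp 1 := by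
    have := Real.add_one_le_exp 1
    linarith
  have h3 : 2 / (c * Real.exp 1) ≤ 1 / c := by
    rw [div_le_div_iff₀ (by positivity) hc]
    nlinarith [Real.exp_pos 1]
  have h4 : (0:ℝ) ≤ Real.sqrt 2 * Real.sqrt (π / c) := by positivity
  calc 2 / (c * Real.exp 1) * (Real.sqrt 2 * Real.sqrt (π / c))
      ≤ 1 / c * (Real.sqrt 2 * Real.sqrt (π / c)) := mul_le_mul_of_nonneg_right h3 h4
    _ = Real.sqrt 2 / c * Real.sqrt (π / c) := by ring

lemma aux_pi {d : ℕ} {c : ℝ} (hc : 0 < c) :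
    Integrable (fun x : Fin d → ℝ => (∑ i, x i ^ 2) * Real.exp (-c * ∑ i, x i ^ 2)) ∧
    ∫ x : Fin d → ℝ, (∑ i, x i ^ 2) * Real.exp (-c * ∑ i, x i ^ 2) ≤
      d * (Real.sqrt 2 / c * Real.sqrt (π / c) ^ d) := by
  classical
  set g : Fin d → Fin d → ℝ → ℝ :=
    fun i j t => (if j = i then t ^ 2 else 1) * Real.exp (-c * t ^ 2) with hg
  have hgint : ∀ i j, Integrable (g i j) := by
    intro i j
    by_cases h : j = i
    · simp only [hg, h, if_pos rfl]
      exact aux_int_sq_exp hc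
    · simp only [hg, if_neg h, one_mul]
      exact integrable_exp_neg_mul_sq hc
  have hkey : ∀ x : Fin d → ℝ,
      (∑ i, x i ^ 2) * Real.exp (-c * ∑ i, x i ^ 2) = ∑ i, ∏ j, g i j (x j) := by
    intro x
    have hexp : Real.exp (-c * ∑ i, x i ^ 2) = ∏ j, Real.exp (-c * x j ^ 2) := by
      rw [← Real.exp_sum]
      congr 1
      rw [Finset.mul_sum]
    have : ∀ i, (∏ j, g i j (x j)) = x i ^ 2 * ∏ j, Real.exp (-c * x j ^ 2) := by
      intro i
      rw [hg]
      simp only []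
      rw [Finset.prod_mul_distrib]
      congr 1
      simp [Finset.prod_ite_eq']
    simp only [this, ← Finset.sum_mul, hexp]
  have hintsum : Integrable
      (fun x : Fin d → ℝ => ∑ i, ∏ j, g i j (x j)) (volume : Measure (Fin d → ℝ)) := by
    apply integrable_finset_sum
    intro i _
    exact Integrable.fintype_prod (f := g i) (fun j => hgint i j)
  constructor
  · exact hintsum.congr (Filter.EventuallyEq.of_eq (funext fun x => (hkey x).symm))
  · have h1 : ∫ x : Fin d → ℝ, (∑ i, x i ^ 2) * Real.exp (-c * ∑ i, x i ^ 2)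
        = ∑ i, ∫ x : Fin d → ℝ, ∏ j, g i j (x j) := by
      rw [show (fun x : Fin d → ℝ => (∑ i, x i ^ 2) * Real.exp (-c * ∑ i, x i ^ 2))
          = fun x => ∑ i, ∏ j, g i j (x j) from funext hkey]
      exact integral_finset_sum _ (fun i _ => Integrable.fintype_prod (f := g i) (fun j => hgint i j))
    rw [h1]
    have hbd : ∀ i : Fin d, ∫ x : Fin d → ℝ, ∏ j, g i j (x j)
        ≤ Real.sqrt 2 / c * Real.sqrt (π / c) ^ d := by
      intro i
      rw [integral_fintype_prod_volume_eq_prod (g i)]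
      rw [← Finset.mul_prod_erase Finset.univ _ (Finset.mem_univ i)]
      have hfi : ∫ t, g i i t ≤ Real.sqrt 2 / c * Real.sqrt (π / c) := by
        simp only [hg, if_pos rfl]
        exact aux_onedim hc
      have hfj : ∀ j ∈ Finset.univ.erase i, ∫ t, g i j t = Real.sqrt (π / c) := by
        intro j hj
        have hji : j ≠ i := Finset.ne_of_mem_erase hj
        simp only [hg, if_neg hji, one_mul]
        exact integral_gaussian c
      rw [Finset.prod_congr rfl hfj, Finset.prod_const]
      have hcard : (Finset.univ.erase i).card = d - 1 := by
        rw [Finset.card_erase_of_mem (Finset.mem_univ i), Finset.card_univ, Fintype.card_fin]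
      rw [hcard]
      have hd1 : d - 1 + 1 = d := Nat.succ_pred_eq_of_pos (Fin.pos i)
      calc (∫ t, g i i t) * Real.sqrt (π / c) ^ (d - 1)
          ≤ (Real.sqrt 2 / c * Real.sqrt (π / c)) * Real.sqrt (π / c) ^ (d - 1) := by
            apply mul_le_mul_of_nonneg_right hfi (by positivity)
        _ = Real.sqrt 2 / c * Real.sqrt (π / c) ^ (d - 1 + 1) := by ring
        _ = Real.sqrt 2 / c * Real.sqrt (π / c) ^ d := by rw [hd1]
    calc ∑ i : Fin d, ∫ x : Fin d → ℝ, ∏ j, g i j (x j)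
        ≤ ∑ _i : Fin d, Real.sqrt 2 / c * Real.sqrt (π / c) ^ d := Finset.sum_le_sum (fun i _ => hbd i)
      _ = d * (Real.sqrt 2 / c * Real.sqrt (π / c) ^ d) := by
          rw [Finset.sum_const, Finset.card_univ, Fintype.card_fin, nsmul_eq_mul]

lemma aux_eucl0 {d : ℕ} {c : ℝ} (hc : 0 < c) :
    Integrable (fun z : EuclideanSpace ℝ (Fin d) => ‖z‖ ^ 2 * Real.exp (-c * ‖z‖ ^ 2)) ∧
    ∫ z : EuclideanSpace ℝ (Fin d), ‖z‖ ^ 2 * Real.exp (-c * ‖z‖ ^ 2) ≤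
      d * (Real.sqrt 2 / c * Real.sqrt (π / c) ^ d) := by
  have hm := EuclideanSpace.volume_preserving_symm_measurableEquiv_toLp (Fin d)
  set e := (MeasurableEquiv.toLp 2 (Fin d → ℝ)).symm with he
  set G : (Fin d → ℝ) → ℝ := fun x => (∑ i, x i ^ 2) * Real.exp (-c * ∑ i, x i ^ 2) with hG
  have hnorm : ∀ z : EuclideanSpace ℝ (Fin d), ‖z‖ ^ 2 = ∑ i, z i ^ 2 := by
    intro z
    rw [EuclideanSpace.norm_eq, Real.sq_sqrt (Finset.sum_nonneg fun i _ => by positivity)]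
    simp [sq_abs]
  have hcomp : (fun z : EuclideanSpace ℝ (Fin d) => ‖z‖ ^ 2 * Real.exp (-c * ‖z‖ ^ 2)) = G ∘ e := by
    funext z
    simp only [Function.comp_apply, hG, hnorm z]
    rfl
  constructor
  · rw [hcomp, hm.integrable_comp_emb (MeasurableEquiv.measurableEmbedding e)]
    exact (aux_pi hc).1
  · rw [hcomp]
    have := hm.integral_comp (MeasurableEquiv.measurableEmbedding e) G
    rw [show ∫ z : EuclideanSpace ℝ (Fin d), (G ∘ e) z = ∫ z, G (e z) from rfl, this]
    exact (aux_pi hc).2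

lemma aux_eucl {d : ℕ} {c : ℝ} (hc : 0 < c) (m : EuclideanSpace ℝ (Fin d)) :
    Integrable (fun z : EuclideanSpace ℝ (Fin d) => ‖z - m‖ ^ 2 * Real.exp (-c * ‖z - m‖ ^ 2)) ∧
    ∫ z : EuclideanSpace ℝ (Fin d), ‖z - m‖ ^ 2 * Real.exp (-c * ‖z - m‖ ^ 2) ≤
      d * (Real.sqrt 2 / c * Real.sqrt (π / c) ^ d) := by
  constructor
  · exact (aux_eucl0 hc).1.comp_sub_right m
  · rw [integral_sub_right_eq_self
      (fun z : EuclideanSpace ℝ (Fin d) => ‖z‖ ^ 2 * Real.exp (-c * ‖z‖ ^ 2)) m]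
    exact (aux_eucl0 hc).2

lemma aux_strong {d : ℕ} {μc : ℝ} {f : EuclideanSpace ℝ (Fin d) → ℝ}
    (hsc : StrongConvexOn Set.univ μc f) {m : EuclideanSpace ℝ (Fin d)}
    (hloc : IsLocalMin f m) (z : EuclideanSpace ℝ (Fin d)) :
    f m + μc / 2 * ‖z - m‖ ^ 2 ≤ f z := by
  obtain ⟨δ, hδ, hball⟩ := Metric.eventually_nhds_iff.1 hloc
  have hKnn : 0 ≤ ‖z - m‖ ^ 2 := by positivity
  refine le_of_forall_pos_le_add fun ε hε => ?_
  set K : ℝ := μc / 2 * ‖z - m‖ ^ 2 with hK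
  set b : ℝ := min (δ / (2 * (‖z - m‖ + 1))) (min (ε / (|K| + 1)) 1) with hb
  have hbpos : 0 < b := by
    apply lt_min
    · positivity
    · apply lt_min
      · positivity
      · norm_num
  have hb1 : b ≤ 1 := le_trans (min_le_right _ _) (min_le_right _ _)
  have ha : (0:ℝ) ≤ 1 - b := by linarith
  have hab : (1 - b) + b = 1 := by ring
  have hw := hsc.2 (Set.mem_univ m) (Set.mem_univ z) ha hbpos.le hab
  have hwm : ((1 - b) • m + b • z) - m = b • (z - m) := by module
  have hdist : dist ((1 - b) • m + b • z) m < δ := by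
    rw [dist_eq_norm, hwm, norm_smul, Real.norm_of_nonneg hbpos.le]
    have h1 : b ≤ δ / (2 * (‖z - m‖ + 1)) := min_le_left _ _
    have h2 : b * ‖z - m‖ ≤ δ / (2 * (‖z - m‖ + 1)) * (‖z - m‖ + 1) := by
      apply mul_le_mul h1 (by linarith [norm_nonneg (z - m)]) (norm_nonneg _) (by positivity)
    have h3 : δ / (2 * (‖z - m‖ + 1)) * (‖z - m‖ + 1) = δ / 2 := by
      field_simp

    linarith
  have hfm := hball hdist
  have hnorm : ‖m - z‖ = ‖z - m‖ := norm_sub_rev m z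
  rw [smul_eq_mul, smul_eq_mul, hnorm] at hw
  have hstep : f m ≤ f z - (1 - b) * K := by
    have h : f m ≤ (1 - b) * f m + b * f z - (1 - b) * b * K := by
      have h0 := hfm.trans hw
      simp only [← hK] at h0
      linarith [h0]
    nlinarith [h, hbpos]
  have hbK : b * K ≤ ε := by
    have h1 : b ≤ ε / (|K| + 1) := le_trans (min_le_right _ _) (min_le_left _ _)
    have h2 : K ≤ |K| := le_abs_self K
    have h3 : 0 ≤ |K| := abs_nonneg K
    have h4 : b * K ≤ b * |K| := by nlinarith
    have h5 : b * |K| ≤ ε / (|K| + 1) * |K| := by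
      apply mul_le_mul_of_nonneg_right h1 h3
    have h6 : ε / (|K| + 1) * |K| ≤ ε := by
      rw [div_mul_eq_mul_div, div_le_iff₀ (by positivity)]
      nlinarith
    linarith
  linarith

lemma aux_density {d : ℕ} {μc : ℝ} {p : EuclideanSpace ℝ (Fin d) → ℝ}
    (hpnn : ∀ z, 0 ≤ p z) (hlc : StronglyLogConcave μc p)
    {m : EuclideanSpace ℝ (Fin d)} (hmax : ∀ z, p z ≤ p m) (hpm : 0 < p m) :
    ∀ z, p z ≤ p m * Real.exp (-(μc / 2) * ‖z - m‖ ^ 2) := by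
  obtain ⟨hcd, hsc⟩ := hlc
  set f : EuclideanSpace ℝ (Fin d) → ℝ := fun x => -Real.log (p x) with hf
  have hmono : ∀ z, 0 < p z → f m ≤ f z := by
    intro z hz
    simp only [hf, neg_le_neg_iff]
    exact Real.log_le_log hz (hmax z)
  have hzero : ∀ z, p z = 0 → f z = 0 := by
    intro z hz
    simp [hf, hz]
  have hloc : IsLocalMin f m := by
    by_cases hfm : f m ≤ 0
    · apply Filter.Eventually.of_forall
      intro z
      rcases eq_or_lt_of_le (hpnn z) with h | h
      · rw [hzero z h.symm]; exact hfm
      · exact hmono z h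
    · push_neg at hfm
      have hcont : ContinuousAt f m := (hcd.continuous.continuousAt)
      have hev : ∀ᶠ w in nhds m, f w ∈ Set.Ioi (0:ℝ) :=
        hcont.preimage_mem_nhds (Ioi_mem_nhds hfm)
      apply hev.mono
      intro w hw
      rcases eq_or_lt_of_le (hpnn w) with h | h
      · exact absurd (hzero w h.symm) (ne_of_gt hw)
      · exact hmono w h
  intro z
  have hkey := aux_strong hsc hloc z
  rcases eq_or_lt_of_le (hpnn z) with h | h
  · rw [← h]; positivity
  · have h1 : p z = Real.exp (-(f z)) := by
      simp only [hf, neg_neg]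
      rw [Real.exp_log h]
    have h2 : p m = Real.exp (-(f m)) := by
      simp only [hf, neg_neg]
      rw [Real.exp_log hpm]
    rw [h1, h2, ← Real.exp_add]
    apply Real.exp_le_exp.2
    have : -(μc / 2) * ‖z - m‖ ^ 2 = -(μc / 2 * ‖z - m‖ ^ 2) := by ring
    rw [this]
    linarith

lemma aux_core {d : ℕ} {μc : ℝ} (hμc : 0 < μc) {p : EuclideanSpace ℝ (Fin d) → ℝ}
    (hpnn : ∀ z, 0 ≤ p z)
    {ν : Measure (EuclideanSpace ℝ (Fin d))} [IsProbabilityMeasure ν]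
    (hdens : ν = volume.withDensity (fun z => ENNReal.ofReal (p z)))
    (hlc : StronglyLogConcave μc p)
    (hsup : ∀ z, p z * (2 * π / μc) ^ ((d : ℝ) / 2) ≤ 1)
    {m : EuclideanSpace ℝ (Fin d)} (hmax : ∀ z, p z ≤ p m) :
    Integrable (fun z => ‖z - m‖ ^ 2) ν ∧ (∫ z, ‖z - m‖ ^ 2 ∂ν) ≤ 4 * ((d : ℝ) / μc) ∧
    Integrable (fun z => ‖z - m‖) ν ∧ (∫ z, ‖z - m‖ ∂ν) ≤ 2 * Real.sqrt ((d : ℝ) / μc) := by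
  -- positivity of p m
  have hpm : 0 < p m := by
    rcases eq_or_lt_of_le (hpnn m) with h | h
    · exfalso
      have hp0 : ∀ z, p z = 0 := fun z => le_antisymm (le_trans (hmax z) h.symm.le) (hpnn z)
    -- then ν = 0
      have : ν = 0 := by
        rw [hdens]
        have : (fun z : EuclideanSpace ℝ (Fin d) => ENNReal.ofReal (p z)) = 0 := by
          funext z; simp [hp0 z]
        rw [this, withDensity_zero]
      have h1 : ν Set.univ = 1 := measure_univ
      rw [this] at h1
      simp at h1
    · exact h
  set c : ℝ := μc / 2 with hc_def
  have hc : 0 < c := by positivity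
  have hq := aux_density hpnn hlc hmax hpm
  have hq' : ∀ z, p z ≤ p m * Real.exp (-c * ‖z - m‖ ^ 2) := by
    intro z
    have := hq z
    rwa [show -(μc / 2) * ‖z - m‖ ^ 2 = -c * ‖z - m‖ ^ 2 by rw [hc_def]] at this
  -- real bound on the gaussian comparison integral
  have hsupm := hsup m
  have hA : Real.sqrt (π / c) ^ d = (2 * π / μc) ^ ((d : ℝ) / 2) := by
    have hx : (0:ℝ) ≤ 2 * π / μc := by positivity
    have h1 : π / c = 2 * π / μc := by
      rw [hc_def]; field_simp
    rw [h1, Real.sqrt_eq_rpow, ← Real.rpow_natCast ((2 * π / μc) ^ ((1:ℝ)/2)) d,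
      ← Real.rpow_mul hx]
    congr 1
    ring
  have hJ : p m * ∫ z : EuclideanSpace ℝ (Fin d), ‖z - m‖ ^ 2 * Real.exp (-c * ‖z - m‖ ^ 2)
      ≤ 4 * ((d : ℝ) / μc) := by
    have h1 := (aux_eucl hc m).2
    have h2 : p m * ∫ z : EuclideanSpace ℝ (Fin d), ‖z - m‖ ^ 2 * Real.exp (-c * ‖z - m‖ ^ 2)
        ≤ p m * (d * (Real.sqrt 2 / c * Real.sqrt (π / c) ^ d)) :=
      mul_le_mul_of_nonneg_left h1 hpm.le
    refine h2.trans ?_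
    have h3 : p m * (d * (Real.sqrt 2 / c * Real.sqrt (π / c) ^ d))
        = (d * (Real.sqrt 2 / c)) * (p m * (2 * π / μc) ^ ((d : ℝ) / 2)) := by
      rw [hA]; ring
    rw [h3]
    have h4 : (d * (Real.sqrt 2 / c)) * (p m * (2 * π / μc) ^ ((d : ℝ) / 2))
        ≤ (d * (Real.sqrt 2 / c)) * 1 := by
      apply mul_le_mul_of_nonneg_left hsupm
      positivity
    refine h4.trans ?_
    rw [mul_one]
    have hsqrt2 : Real.sqrt 2 ≤ 2 := by
      nlinarith [Real.sq_sqrt (by norm_num : (0:ℝ) ≤ 2), Real.sqrt_nonneg 2]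
    have h5 : Real.sqrt 2 / c = 2 * Real.sqrt 2 / μc := by
      rw [hc_def]; field_simp
    rw [h5]
    have h6 : 4 * ((d:ℝ) / μc) = (d:ℝ) * (4 / μc) := by ring
    rw [h6]
    gcongr
    linarith
  -- lintegral bound
  set q : EuclideanSpace ℝ (Fin d) → ℝ := fun z => p m * Real.exp (-c * ‖z - m‖ ^ 2) with hqdef
  have hqcont : Continuous q := by
    apply continuous_const.mul
    apply Real.continuous_exp.comp
    exact (continuous_const.mul (((continuous_id.sub continuous_const).norm.pow 2)))
  have hgcont : Continuous (fun z : EuclideanSpace ℝ (Fin d) => ‖z - m‖ ^ 2) :=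
    (continuous_id.sub continuous_const).norm.pow 2
  have hqnn : ∀ z, 0 ≤ q z := fun z => by
    have := Real.exp_pos (-c * ‖z - m‖ ^ 2); positivity
  have hqint : Integrable (fun z => q z * ‖z - m‖ ^ 2) := by
    have h0 := (aux_eucl hc m).1.const_mul (p m)
    apply h0.congr
    filter_upwards with z
    simp only [hqdef]
    ring
  have hL : (∫⁻ z, ENNReal.ofReal (‖z - m‖ ^ 2) ∂ν) ≤ ENNReal.ofReal (4 * ((d:ℝ) / μc)) := by
    calc (∫⁻ z, ENNReal.ofReal (‖z - m‖ ^ 2) ∂ν)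
        ≤ ∫⁻ z, ENNReal.ofReal (‖z - m‖ ^ 2)
            ∂(volume.withDensity (fun z => ENNReal.ofReal (q z))) := by
          rw [hdens]
          refine lintegral_mono' (withDensity_mono ?_) le_rfl
          filter_upwards with z
          exact ENNReal.ofReal_le_ofReal (hq' z)
      _ = ∫⁻ z, ((fun z => ENNReal.ofReal (q z)) * (fun z => ENNReal.ofReal (‖z - m‖ ^ 2))) z
            ∂volume := by
          rw [lintegral_withDensity_eq_lintegral_mul volume
            (hqcont.measurable.ennreal_ofReal) (hgcont.measurable.ennreal_ofReal)]
      _ = ∫⁻ z, ENNReal.ofReal (q z * ‖z - m‖ ^ 2) ∂volume := by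
          apply lintegral_congr
          intro z
          simp only [Pi.mul_apply]
          rw [← ENNReal.ofReal_mul (hqnn z)]
      _ = ENNReal.ofReal (∫ z, q z * ‖z - m‖ ^ 2) :=
          (ofReal_integral_eq_lintegral_ofReal hqint
            (Filter.Eventually.of_forall fun z => by
              have h := hqnn z; positivity)).symm
      _ ≤ ENNReal.ofReal (4 * ((d:ℝ) / μc)) := by
          apply ENNReal.ofReal_le_ofReal
          have heq : (∫ z, q z * ‖z - m‖ ^ 2)
              = p m * ∫ z : EuclideanSpace ℝ (Fin d), ‖z - m‖ ^ 2
                  * Real.exp (-c * ‖z - m‖ ^ 2) := by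
            rw [← MeasureTheory.integral_const_mul]
            congr 1
            funext z
            simp only [hqdef]
            ring
          rw [heq]
          exact hJ
  have hmeas2 : AEStronglyMeasurable (fun z : EuclideanSpace ℝ (Fin d) => ‖z - m‖ ^ 2) ν :=
    hgcont.aestronglyMeasurable
  have hint2 : Integrable (fun z => ‖z - m‖ ^ 2) ν := by
    refine ⟨hmeas2, ?_⟩
    rw [hasFiniteIntegral_iff_ofReal (Filter.Eventually.of_forall fun z => by positivity)]
    exact lt_of_le_of_lt hL ENNReal.ofReal_lt_top
  have hI2 : (∫ z, ‖z - m‖ ^ 2 ∂ν) ≤ 4 * ((d:ℝ) / μc) := by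
    rw [integral_eq_lintegral_of_nonneg_ae (Filter.Eventually.of_forall fun z => by positivity)
      hmeas2]
    exact ENNReal.toReal_le_of_le_ofReal (by positivity) hL
  have hmem : MemLp (fun z : EuclideanSpace ℝ (Fin d) => ‖z - m‖) 2 ν := by
    refine (memLp_two_iff_integrable_sq ?_).2 hint2
    exact (continuous_id.sub continuous_const).norm.aestronglyMeasurable
  have hint1 : Integrable (fun z => ‖z - m‖) ν := hmem.integrable one_le_two
  have hI1 : (∫ z, ‖z - m‖ ∂ν) ≤ 2 * Real.sqrt ((d:ℝ) / μc) := by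
    have hvar := variance_nonneg (fun z : EuclideanSpace ℝ (Fin d) => ‖z - m‖) ν
    rw [variance_eq_sub hmem] at hvar
    simp only [Pi.pow_apply] at hvar
    have hsq : (∫ z, ‖z - m‖ ∂ν) ^ 2 ≤ ∫ z, ‖z - m‖ ^ 2 ∂ν := by linarith
    have hnn : 0 ≤ ∫ z, ‖z - m‖ ∂ν := integral_nonneg fun z => norm_nonneg _
    calc (∫ z, ‖z - m‖ ∂ν) = Real.sqrt ((∫ z, ‖z - m‖ ∂ν) ^ 2) := (Real.sqrt_sq hnn).symm
      _ ≤ Real.sqrt (4 * ((d:ℝ) / μc)) := Real.sqrt_le_sqrt (hsq.trans hI2)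
      _ = 2 * Real.sqrt ((d:ℝ) / μc) := by
          rw [Real.sqrt_mul (by norm_num : (0:ℝ) ≤ 4),
            show (4:ℝ) = 2 ^ 2 by norm_num, Real.sqrt_sq (by norm_num : (0:ℝ) ≤ 2)]
  exact ⟨hint2, hI2, hint1, hI1⟩

lemma aux_push {d nx : ℕ} (D : EuclideanSpace ℝ (Fin d) → EuclideanSpace ℝ (Fin nx))
    (hD : Measurable D) {LD : ℝ} (hLD : 0 ≤ LD)
    (hLip : ∀ z₁ z₂, ‖D z₁ - D z₂‖ ≤ LD * ‖z₁ - z₂‖)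
    {ν : Measure (EuclideanSpace ℝ (Fin d))} [IsProbabilityMeasure ν]
    (m : EuclideanSpace ℝ (Fin d))
    (hint2 : Integrable (fun z => ‖z - m‖ ^ 2) ν)
    (hint1 : Integrable (fun z => ‖z - m‖) ν) :
    ‖D m - ∫ x, x ∂(ν.map D)‖ ≤ LD * ∫ z, ‖z - m‖ ∂ν ∧
    Integrable (fun x => ‖x - D m‖ ^ 2) (ν.map D) ∧
    (∫ x, ‖x - D m‖ ^ 2 ∂(ν.map D))
      = (∫ x, ‖x - ∫ x, x ∂(ν.map D)‖ ^ 2 ∂(ν.map D))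
        + ‖(∫ x, x ∂(ν.map D)) - D m‖ ^ 2 := by
  haveI : IsProbabilityMeasure (ν.map D) := Measure.isProbabilityMeasure_map hD.aemeasurable
  have hDm : AEStronglyMeasurable D ν := hD.aestronglyMeasurable
  have hDint : Integrable D ν := by
    refine Integrable.mono' ((hint1.const_mul LD).add (integrable_const ‖D m‖)) hDm ?_
    filter_upwards with z
    calc ‖D z‖ = ‖(D z - D m) + D m‖ := by rw [sub_add_cancel]
      _ ≤ ‖D z - D m‖ + ‖D m‖ := norm_add_le _ _
      _ ≤ LD * ‖z - m‖ + ‖D m‖ := by linarith [hLip z m]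
  have hDDm2 : Integrable (fun z => ‖D z - D m‖ ^ 2) ν := by
    refine Integrable.mono' (hint2.const_mul (LD ^ 2))
      (((hD.sub measurable_const).norm.pow measurable_const).aestronglyMeasurable) ?_
    filter_upwards with z
    rw [Real.norm_of_nonneg (by positivity)]
    calc ‖D z - D m‖ ^ 2 ≤ (LD * ‖z - m‖) ^ 2 := by
          apply pow_le_pow_left₀ (norm_nonneg _) (hLip z m)
      _ = LD ^ 2 * ‖z - m‖ ^ 2 := by ring
  set m' : EuclideanSpace ℝ (Fin nx) := ∫ x, x ∂(ν.map D) with hm'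
  have hm'eq : m' = ∫ z, D z ∂ν := by
    rw [hm']
    exact integral_map hD.aemeasurable aestronglyMeasurable_id
  have hXint : Integrable (fun x => x) (ν.map D) := by
    have : Integrable (id : EuclideanSpace ℝ (Fin nx) → EuclideanSpace ℝ (Fin nx)) (ν.map D) := by
      rw [integrable_map_measure aestronglyMeasurable_id hD.aemeasurable]
      exact hDint
    exact this
  have hnormint : Integrable (fun z => ‖D m - D z‖) ν := by
    simpa using ((integrable_const (D m)).sub hDint).norm
  constructor
  · have hsub : D m - m' = ∫ z, (D m - D z) ∂ν := by
      rw [integral_sub (integrable_const (D m)) hDint, integral_const, probReal_univ,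
        one_smul, hm'eq]
    rw [hsub]
    calc ‖∫ z, (D m - D z) ∂ν‖ ≤ ∫ z, ‖D m - D z‖ ∂ν := norm_integral_le_integral_norm _
      _ ≤ ∫ z, LD * ‖z - m‖ ∂ν := by
          apply integral_mono hnormint (hint1.const_mul LD)
          intro z
          show ‖D m - D z‖ ≤ LD * ‖z - m‖
          rw [norm_sub_rev]
          exact hLip z m
      _ = LD * ∫ z, ‖z - m‖ ∂ν := integral_const_mul LD _
  have hgm : AEStronglyMeasurable (fun x : EuclideanSpace ℝ (Fin nx) => ‖x - D m‖ ^ 2)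
      (ν.map D) :=
    ((continuous_id.sub continuous_const).norm.pow 2).aestronglyMeasurable
  have hintDm : Integrable (fun x => ‖x - D m‖ ^ 2) (ν.map D) := by
    rw [integrable_map_measure hgm hD.aemeasurable]
    exact hDDm2
  refine ⟨hintDm, ?_⟩
  have hgm' : AEStronglyMeasurable (fun x : EuclideanSpace ℝ (Fin nx) => ‖x - m'‖ ^ 2)
      (ν.map D) :=
    ((continuous_id.sub continuous_const).norm.pow 2).aestronglyMeasurable
  have hbnd : Integrable (fun x : EuclideanSpace ℝ (Fin nx)
      => 2 * ‖x - D m‖ ^ 2 + 2 * ‖D m - m'‖ ^ 2) (ν.map D) := by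
    exact (hintDm.const_mul 2).add (integrable_const (2 * ‖D m - m'‖ ^ 2))
  have hintm' : Integrable (fun x => ‖x - m'‖ ^ 2) (ν.map D) := by
    refine Integrable.mono' hbnd hgm' ?_
    filter_upwards with x
    rw [Real.norm_of_nonneg (by positivity)]
    have h1 : ‖x - m'‖ ≤ ‖x - D m‖ + ‖D m - m'‖ := by
      calc ‖x - m'‖ = ‖(x - D m) + (D m - m')‖ := by rw [sub_add_sub_cancel]
        _ ≤ ‖x - D m‖ + ‖D m - m'‖ := norm_add_le _ _
    nlinarith [norm_nonneg (x - m'), norm_nonneg (x - D m), norm_nonneg (D m - m'),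
      mul_self_le_mul_self (norm_nonneg (x - m')) h1,
      sq_nonneg (‖x - D m‖ - ‖D m - m'‖)]
  have hsubint : Integrable (fun x => x - m') (ν.map D) := by
    exact hXint.sub (integrable_const m')
  have hinner : Integrable (fun x => 2 * (inner ℝ (m' - D m) (x - m') : ℝ)) (ν.map D) := by
    simpa using (hsubint.const_inner (m' - D m)).const_mul 2
  have hsum : Integrable (fun x => 2 * (inner ℝ (m' - D m) (x - m') : ℝ) + ‖m' - D m‖ ^ 2)
      (ν.map D) := by
    simpa using hinner.add (integrable_const (‖m' - D m‖ ^ 2))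
  have hptwise : ∀ x : EuclideanSpace ℝ (Fin nx),
      ‖x - D m‖ ^ 2 = ‖x - m'‖ ^ 2 + (2 * (inner ℝ (m' - D m) (x - m') : ℝ) + ‖m' - D m‖ ^ 2) := by
    intro x
    have h := norm_add_sq_real (x - m') (m' - D m)
    rw [sub_add_sub_cancel] at h
    rw [h, real_inner_comm]
    ring
  have hsplit : (∫ x, ‖x - D m‖ ^ 2 ∂(ν.map D))
      = (∫ x, ‖x - m'‖ ^ 2 ∂(ν.map D))
        + ∫ x, (2 * (inner ℝ (m' - D m) (x - m') : ℝ) + ‖m' - D m‖ ^ 2) ∂(ν.map D) := by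
    rw [← integral_add hintm' hsum]
    apply integral_congr_ae
    filter_upwards with x
    rw [hptwise x]
  have hzero : (∫ x, (inner ℝ (m' - D m) (x - m') : ℝ) ∂(ν.map D)) = 0 := by
    rw [integral_inner hsubint]
    have h0 : (∫ x, (x - m') ∂(ν.map D)) = 0 := by
      rw [integral_sub hXint (integrable_const m'), integral_const, probReal_univ,
        one_smul, hm']
      simp
    rw [h0, inner_zero_right]
  rw [hsplit, integral_add hinner (integrable_const _), integral_const_mul, hzero, mul_zero,
    zero_add, integral_const, probReal_univ, one_smul,
    norm_sub_rev m' (D m)]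

/-- **Theorem 3.8 (latent MAP approximation of the MMSE estimator).**
Let the posterior of the latent `Z` given `Y = y` be given by a Markov kernel `κ` with
density `p y`, `μc`-strongly log-concave with `(sup_z p y z)·(2π/μc)^{d/2} ≤ 1` for a.e. `y`.
Let `D : ℝᵈ → ℝ^{n_x}` be `L_D`-Lipschitz and assume the pushforward identity
`D_# p_{Z|Y}(·|y) = p_{X|Y}(·|y)` (the posterior kernel `κX` of `X = D(Z)`).  With `zmap`
the latent MAP estimator and `xmmse` the posterior mean of `X`, one has
`E‖D(Z_MAP) − X_MMSE‖ ≤ 2·L_D·√(d/μc)` and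
`E‖X − D(Z_MAP)‖² ≤ D* + 4·L_D²·(d/μc)`, where `D* = E‖X − X_MMSE‖²`. -/
theorem latent_map_approximates_mmse {d nx : ℕ} {𝒴 : Type*} [MeasurableSpace 𝒴]
    (ρ : Measure 𝒴) [IsProbabilityMeasure ρ]
    (κ : Kernel 𝒴 (EuclideanSpace ℝ (Fin d))) [IsMarkovKernel κ]
    (κX : Kernel 𝒴 (EuclideanSpace ℝ (Fin nx))) [IsMarkovKernel κX]
    (p : 𝒴 → EuclideanSpace ℝ (Fin d) → ℝ)
    (μc : ℝ) (hμc : 0 < μc)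
    (hpnn : ∀ᵐ y ∂ρ, ∀ z, 0 ≤ p y z)
    (hdens : ∀ᵐ y ∂ρ, κ y = volume.withDensity (fun z => ENNReal.ofReal (p y z)))
    (hlc : ∀ᵐ y ∂ρ, StronglyLogConcave μc (p y))
    (hsup : ∀ᵐ y ∂ρ, ∀ z, p y z * (2 * π / μc) ^ ((d : ℝ) / 2) ≤ 1)
    (D : EuclideanSpace ℝ (Fin d) → EuclideanSpace ℝ (Fin nx))
    (hD : Measurable D) (LD : ℝ) (hLD : 0 ≤ LD)
    (hLip : ∀ z₁ z₂, ‖D z₁ - D z₂‖ ≤ LD * ‖z₁ - z₂‖)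
    (hpush : ∀ᵐ y ∂ρ, (κ y).map D = κX y)
    (zmap : 𝒴 → EuclideanSpace ℝ (Fin d))
    (hmap : ∀ᵐ y ∂ρ, ∀ z, p y z ≤ p y (zmap y))
    (xmmse : 𝒴 → EuclideanSpace ℝ (Fin nx))
    (hmmse : ∀ᵐ y ∂ρ, xmmse y = ∫ x, x ∂(κX y)) :
    (∫ y, ‖D (zmap y) - xmmse y‖ ∂ρ ≤ 2 * LD * Real.sqrt (d / μc)) ∧
      (∫ y, ∫ x, ‖x - D (zmap y)‖ ^ 2 ∂(κX y) ∂ρ ≤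
        (∫ y, ∫ x, ‖x - xmmse y‖ ^ 2 ∂(κX y) ∂ρ) + 4 * LD ^ 2 * (d / μc)) := by
  have hd0 : (0:ℝ) ≤ (d:ℝ) / μc := by positivity
  have hae : ∀ᵐ y ∂ρ,
      (‖D (zmap y) - xmmse y‖ ≤ 2 * LD * Real.sqrt ((d:ℝ) / μc)) ∧
      (∫ x, ‖x - D (zmap y)‖ ^ 2 ∂(κX y))
        = (∫ x, ‖x - (∫ x, x ∂(κX y))‖ ^ 2 ∂(κX y))
          + ‖(∫ x, x ∂(κX y)) - D (zmap y)‖ ^ 2 ∧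
      ‖(∫ x, x ∂(κX y)) - D (zmap y)‖ ^ 2 ≤ 4 * LD ^ 2 * ((d:ℝ) / μc) ∧
      xmmse y = ∫ x, x ∂(κX y) := by
    filter_upwards [hpnn, hdens, hlc, hsup, hpush, hmap, hmmse] with y h1 h2 h3 h4 h5 h6 h7
    obtain ⟨hint2, hI2, hint1, hI1⟩ := aux_core hμc h1 h2 h3 h4 h6
    obtain ⟨ha, hb, hc⟩ := aux_push D hD hLD hLip (zmap y) hint2 hint1
    rw [h5] at ha hb hc
    have hbound : ‖D (zmap y) - ∫ x, x ∂(κX y)‖ ≤ 2 * LD * Real.sqrt ((d:ℝ) / μc) := by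
      refine ha.trans ?_
      calc LD * ∫ z, ‖z - zmap y‖ ∂(κ y)
          ≤ LD * (2 * Real.sqrt ((d:ℝ) / μc)) := mul_le_mul_of_nonneg_left hI1 hLD
        _ = 2 * LD * Real.sqrt ((d:ℝ) / μc) := by ring
    have h8 : ‖(∫ x, x ∂(κX y)) - D (zmap y)‖ ≤ 2 * LD * Real.sqrt ((d:ℝ) / μc) := by
      rw [norm_sub_rev]; exact hbound
    refine ⟨by rw [h7]; exact hbound, hc, ?_, h7⟩
    calc ‖(∫ x, x ∂(κX y)) - D (zmap y)‖ ^ 2 ≤ (2 * LD * Real.sqrt ((d:ℝ) / μc)) ^ 2 :=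
          pow_le_pow_left₀ (norm_nonneg _) h8 2
      _ = 4 * LD ^ 2 * ((d:ℝ) / μc) := by
          rw [mul_pow, mul_pow, Real.sq_sqrt hd0]; ring
  constructor
  · by_cases hφ : Integrable (fun y => ‖D (zmap y) - xmmse y‖) ρ
    · calc ∫ y, ‖D (zmap y) - xmmse y‖ ∂ρ
          ≤ ∫ _y, 2 * LD * Real.sqrt ((d:ℝ) / μc) ∂ρ :=
            integral_mono_ae hφ (integrable_const _) (hae.mono fun y h => h.1)
        _ = 2 * LD * Real.sqrt ((d:ℝ) / μc) := by
            rw [integral_const, probReal_univ, one_smul]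
    · rw [integral_undef hφ]
      positivity
  · set M : 𝒴 → EuclideanSpace ℝ (Fin nx) := fun y => ∫ x, x ∂(κX y) with hM
    have hMsm : StronglyMeasurable M := by
      apply StronglyMeasurable.integral_kernel_prod_right (f := fun (_ : 𝒴) (x : EuclideanSpace ℝ (Fin nx)) => x)
      exact measurable_snd.stronglyMeasurable
    set Ft : 𝒴 → ℝ := fun y => ∫ x, ‖x - M y‖ ^ 2 ∂(κX y) with hFt
    have hFtsm : StronglyMeasurable Ft := by
      apply StronglyMeasurable.integral_kernel_prod_right
        (f := fun (y : 𝒴) (x : EuclideanSpace ℝ (Fin nx)) => ‖x - M y‖ ^ 2)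
      apply Measurable.stronglyMeasurable
      exact ((measurable_snd.sub (hMsm.measurable.comp measurable_fst)).norm.pow
        measurable_const)
    by_cases hG : Integrable (fun y => ∫ x, ‖x - D (zmap y)‖ ^ 2 ∂(κX y)) ρ
    · have hFtnn : ∀ y, 0 ≤ Ft y := fun y => integral_nonneg fun x => by positivity
      have hae2 : ∀ᵐ y ∂ρ, (∫ x, ‖x - D (zmap y)‖ ^ 2 ∂(κX y)) = Ft y + ‖M y - D (zmap y)‖ ^ 2
          ∧ ‖M y - D (zmap y)‖ ^ 2 ≤ 4 * LD ^ 2 * ((d:ℝ) / μc) := by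
        filter_upwards [hae] with y h
        exact ⟨h.2.1, h.2.2.1⟩
      have hFtint : Integrable Ft ρ := by
        refine Integrable.mono' hG hFtsm.aestronglyMeasurable ?_
        filter_upwards [hae2] with y h
        rw [Real.norm_of_nonneg (hFtnn y)]
        nlinarith [h.1, h.2, sq_nonneg ‖M y - D (zmap y)‖]
      have hdiffint : Integrable (fun y => (∫ x, ‖x - D (zmap y)‖ ^ 2 ∂(κX y)) - Ft y) ρ := by
        exact hG.sub hFtint
      have hdiffle : ∫ y, ((∫ x, ‖x - D (zmap y)‖ ^ 2 ∂(κX y)) - Ft y) ∂ρ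
          ≤ 4 * LD ^ 2 * ((d:ℝ) / μc) := by
        calc ∫ y, ((∫ x, ‖x - D (zmap y)‖ ^ 2 ∂(κX y)) - Ft y) ∂ρ
            ≤ ∫ _y, 4 * LD ^ 2 * ((d:ℝ) / μc) ∂ρ := by
              apply integral_mono_ae hdiffint (integrable_const _)
              filter_upwards [hae2] with y h
              calc (∫ x, ‖x - D (zmap y)‖ ^ 2 ∂(κX y)) - Ft y
                  = ‖M y - D (zmap y)‖ ^ 2 := by rw [h.1]; ring
                _ ≤ 4 * LD ^ 2 * ((d:ℝ) / μc) := h.2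
          _ = 4 * LD ^ 2 * ((d:ℝ) / μc) := by
              rw [integral_const, probReal_univ, one_smul]
      have hsub : ∫ y, ((∫ x, ‖x - D (zmap y)‖ ^ 2 ∂(κX y)) - Ft y) ∂ρ
          = (∫ y, ∫ x, ‖x - D (zmap y)‖ ^ 2 ∂(κX y) ∂ρ) - ∫ y, Ft y ∂ρ :=
        integral_sub hG hFtint
      have hFF : ∫ y, ∫ x, ‖x - xmmse y‖ ^ 2 ∂(κX y) ∂ρ = ∫ y, Ft y ∂ρ := by
        apply integral_congr_ae
        filter_upwards [hae] with y h
        rw [h.2.2.2]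
      rw [hFF]
      linarith [hdiffle, hsub.symm.le, hsub.le]
    · rw [integral_undef hG]
      have h0 : 0 ≤ ∫ y, ∫ x, ‖x - xmmse y‖ ^ 2 ∂(κX y) ∂ρ :=
        integral_nonneg fun y => integral_nonneg fun x => by positivity
      have h1 : 0 ≤ 4 * LD ^ 2 * ((d:ℝ) / μc) := by positivity
      linarith
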